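/- Let K be any field and T : M_n(K) → M_n(K) a linear map preserving Green's J-relation (i.e., rk(A) = rk(B) implies rk(T(A)) = rk(T(B))). Then T is either the zero map or a bijection. -/

import Mathlib

open Matrix

/-- A matrix of rank zero over a field is zero. -/
lemma aux_rank_zero_eq_zero {K : Type*} [Field K] {m k : ℕ}
    {A : Matrix (Fin m) (Fin k) K} (h : A.rank = 0) : A = 0 := by
  have h' : LinearMap.range A.mulVecLin = ⊥ := by
    have := Submodule.finrank_eq_zero (R := K) (M := Fin m → K)
      (S := LinearMap.range A.mulVecLin)
    rw [← this]
    exact h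
  have h2 : A.mulVecLin = 0 := LinearMap.range_eq_bot.mp h'
  ext i j
  have := congrFun (congrArg (fun f => f (Pi.single j 1)) (congrArg DFunLike.coe h2)) i
  simpa [Matrix.mulVecLin_apply, Matrix.mulVec_single] using this

lemma aux_rank_std {K : Type*} [Field K] {m : ℕ} (i j : Fin m) :
    (Matrix.single i j (1 : K)).rank = 1 := by
  have hle : (Matrix.single i j (1 : K)).rank ≤ 1 := by
    rw [single_eq_single_vecMulVec_single, vecMulVec_eq Unit]
    calc (replicateCol Unit (Pi.single i (1:K)) * replicateRow Unit (Pi.single j (1:K))).rank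
        ≤ (replicateCol Unit (Pi.single i (1:K))).rank := rank_mul_le_left _ _
      _ ≤ Fintype.card Unit := rank_le_card_width _
      _ = 1 := by simp
  have hne : Matrix.single i j (1 : K) ≠ 0 := by
    intro h
    have := congrFun (congrFun h i) j
    simp [Matrix.single] at this
  have h1 : (Matrix.single i j (1 : K)).rank ≠ 0 := by
    intro h
    exact hne (aux_rank_zero_eq_zero h)
  omega

/-- If `T` is nonzero, some standard basis matrix has nonzero image. -/
lemma aux_exists_std {K : Type*} [Field K] {n : ℕ}
    (T : Matrix (Fin n) (Fin n) K →ₗ[K] Matrix (Fin n) (Fin n) K)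
    (hT : T ≠ 0) : ∃ i j : Fin n, T (Matrix.single i j 1) ≠ 0 := by
  by_contra h
  push_neg at h
  apply hT
  ext X i j
  rw [matrix_eq_sum_single X]
  rw [map_sum]
  simp only [LinearMap.zero_apply]
  have : ∀ a : Fin n, ∀ b : Fin n, T (Matrix.single a b (X a b)) = 0 := by
    intro a b
    have : Matrix.single a b (X a b) = X a b • Matrix.single a b (1 : K) := by
      ext i' j'
      simp [Matrix.single, smul_ite]
    rw [this, T.map_smul, h a b, smul_zero]
  simp [this]

theorem J_preserver_zero_or_bijective
    {K : Type*} [Field K] {n : ℕ}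
    (T : Matrix (Fin n) (Fin n) K →ₗ[K] Matrix (Fin n) (Fin n) K)
    (hJ : ∀ A B : Matrix (Fin n) (Fin n) K,
      A.rank = B.rank → (T A).rank = (T B).rank) :
    T = 0 ∨ Function.Bijective T := by
  classical
  by_cases hT : T = 0
  · exact Or.inl hT
  right
  have hker : ∀ Y, T Y = 0 → Y = 0 := by
    intro Y hY
    by_contra hY0
    -- a standard basis matrix with nonzero image
    obtain ⟨i, j, hij⟩ := aux_exists_std T hT
    -- n ≥ 2 ?
    match n, T, hJ, Y, hY, hY0, i, j, hij with
    | 0, T, hJ, Y, hY, hY0, i, j, hij => exact i.elim0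
    | 1, T, hJ, Y, hY, hY0, i, j, hij =>
      -- every nonzero 1×1 matrix has rank 1
      have hrne : Y.rank ≠ 0 := fun h => hY0 (aux_rank_zero_eq_zero h)
      have hrn : Y.rank ≤ 1 := by simpa using Y.rank_le_card_width
      have h1 : (Matrix.single i j (1:K)).rank = Y.rank := by
        rw [aux_rank_std]
        omega
      have := hJ _ _ h1
      rw [hY, rank_zero] at this
      exact hij (aux_rank_zero_eq_zero this)
    | (m + 2), T, hJ, Y, hY, hY0, i, j, hij =>
      set r := Y.rank with hr
      have hrne : r ≠ 0 := fun h => hY0 (aux_rank_zero_eq_zero h)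
      have hrn : r ≤ m + 2 := by simpa using Y.rank_le_card_width
      -- diagonal matrix of rank r
      set d : Fin (m + 2) → K := fun k => if (k : ℕ) < r then 1 else 0 with hd
      set D : Matrix (Fin (m + 2)) (Fin (m + 2)) K := diagonal d with hD
      have hDrank : D.rank = r := by
        rw [hD, rank_diagonal]
        have he : { k : Fin (m + 2) // d k ≠ 0 } ≃ Fin r :=
          { toFun := fun x => ⟨(x.1 : ℕ), by
              by_contra hc
              push_neg at hc
              have : d x.1 = 0 := by simp [hd, Nat.not_lt.mpr hc]
              exact x.2 this⟩
            invFun := fun x => ⟨⟨(x : ℕ), lt_of_lt_of_le x.2 hrn⟩, by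
              simp [hd, x.2]⟩
            left_inv := fun x => by ext; simp
            right_inv := fun x => by ext; simp }
        rw [Fintype.card_congr he, Fintype.card_fin]
      -- unipotent matrix
      set E : Matrix (Fin (m + 2)) (Fin (m + 2)) K := Matrix.single 0 1 1 with hE
      set U : Matrix (Fin (m + 2)) (Fin (m + 2)) K := 1 + E with hU
      have hUtri : U.BlockTriangular id := by
        intro a b hab
        simp only [id] at hab
        have hne : a ≠ b := (ne_of_gt hab)
        have ha0 : (0 : Fin (m+2)) ≠ a := by
          intro h
          rw [← h] at hab
          exact absurd hab (by simp [Fin.lt_def])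
        simp [hU, hE, Matrix.one_apply, hne, Matrix.single, ha0]
      have hUdet : IsUnit U.det := by
        rw [Matrix.det_of_upperTriangular hUtri]
        have : ∀ a : Fin (m+2), U a a = 1 := by
          intro a
          have : ¬((0 : Fin (m+2)) = a ∧ (1 : Fin (m+2)) = a) := by
            rintro ⟨h0, h1⟩
            rw [← h0] at h1
            exact absurd h1 (by simp [Fin.ext_iff])
          simp [hU, hE, Matrix.one_apply, Matrix.single, this]
        simp [this]
      set A : Matrix (Fin (m + 2)) (Fin (m + 2)) K := D * U with hA
      have hArank : A.rank = r := by
        rw [hA, rank_mul_eq_left_of_isUnit_det U D hUdet, hDrank]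
      have hAD : A = D + E := by
        rw [hA, hU, mul_add, mul_one]
        congr 1
        ext a b
        rw [hD, diagonal_mul]
        by_cases hab : (0 : Fin (m+2)) = a ∧ (1 : Fin (m+2)) = b
        · obtain ⟨h0, h1⟩ := hab
          have hlt : (↑a : ℕ) < r := by
            rw [← h0]
            simpa using Nat.pos_of_ne_zero hrne
          simp [hE, hd, Matrix.single, h0, h1, hlt]
        · have : E a b = 0 := by
            simp only [hE, Matrix.single, of_apply]
            rw [if_neg hab]
          simp [this]
      -- T kills D and A
      have hTY : (T Y).rank = 0 := by rw [hY, rank_zero]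
      have hTD : T D = 0 :=
        aux_rank_zero_eq_zero (by rw [hJ D Y (by rw [hDrank]), hTY])
      have hTA : T A = 0 :=
        aux_rank_zero_eq_zero (by rw [hJ A Y (by rw [hArank]), hTY])
      have hTE : T E = 0 := by
        have : E = A - D := by rw [hAD]; abel
        rw [this, map_sub, hTA, hTD, sub_zero]
      -- but E has rank 1, same as the std basis matrix with nonzero image
      have : (T E).rank = (T (Matrix.single i j 1)).rank :=
        hJ _ _ (by rw [hE, aux_rank_std, aux_rank_std])
      rw [hTE, rank_zero] at this
      exact hij (aux_rank_zero_eq_zero this.symm)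
  have hinj : Function.Injective T := by
    intro a b hab
    have : T (a - b) = 0 := by rw [map_sub, hab, sub_self]
    have := hker _ this
    exact sub_eq_zero.mp this
  exact ⟨hinj, LinearMap.injective_iff_surjective.mp hinj⟩
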